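/- The Hochschild differential is a graded derivation of the Gerstenhaber bracket: for all D ∈ C^d(A) and E ∈ C^e(A), δ[D,E] = [δD, E] + (−1)^{d+1} [D, δE] in C^{d+e}(A). -/

import Mathlib

open Finset


namespace NCCalc

variable {K A : Type*}

/-- Extend a finite tuple to a sequence by zero. -/
def pad [Zero A] {n : ℕ} (a : Fin n → A) : ℕ → A :=
  fun i => if h : i < n then a ⟨i, h⟩ else 0

/-- Restrict a cochain given on sequences to a cochain of arity `n`. -/
def res [Zero A] (n : ℕ) (F : (ℕ → A) → A) : (Fin n → A) → A :=
  fun a => F (pad a)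

section AddCommGroupA
variable [AddCommGroup A]

/-- The circle (composition) product of Hochschild cochains:
`(D∘E)(a_1,…,a_{d+e−1}) = Σ_{j=0}^{d−1} (−1)^{(e+1)j} D(a_1,…,a_j, E(a_{j+1},…,a_{j+e}), …)`. -/
def circ (d e : ℕ) (D : (Fin d → A) → A) (E : (Fin e → A) → A) : (ℕ → A) → A :=
  fun a => ∑ j ∈ Finset.range d, ((-1 : ℤ) ^ ((e + 1) * j)) •
    D (fun i => if (i : ℕ) < j then a i
        else if (i : ℕ) = j then E (fun t => a (j + (t : ℕ)))
        else a ((i : ℕ) + e - 1))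

/-- The Gerstenhaber bracket `[D,E] = D∘E − (−1)^{(d+1)(e+1)} E∘D`. -/
def gbr (d e : ℕ) (D : (Fin d → A) → A) (E : (Fin e → A) → A) : (ℕ → A) → A :=
  fun a => circ d e D E a - ((-1 : ℤ) ^ ((d + 1) * (e + 1))) • circ e d E D a

end AddCommGroupA

section RingA
variable [Ring A]

/-- The cup product `(D⌣E)(a_1,…,a_{d+e}) = D(a_1,…,a_d)·E(a_{d+1},…,a_{d+e})`. -/
def cup (d e : ℕ) (D : (Fin d → A) → A) (E : (Fin e → A) → A) : (ℕ → A) → A :=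
  fun a => D (fun i => a (i : ℕ)) * E (fun i => a (d + (i : ℕ)))

/-- The Hochschild differential
`(δD)(a_1,…,a_{d+1}) = D(a_1,…,a_d)·a_{d+1} + (−1)^{d+1} a_1·D(a_2,…,a_{d+1})
  + Σ_{j=1}^{d} (−1)^{d+1+j} D(a_1,…,a_j a_{j+1},…,a_{d+1})` (indices shifted to start at 0). -/
def hdel (d : ℕ) (D : (Fin d → A) → A) : (ℕ → A) → A :=
  fun a => D (fun i => a (i : ℕ)) * a d
    + ((-1 : ℤ) ^ (d + 1)) • (a 0 * D (fun i => a ((i : ℕ) + 1)))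
    + ∑ j ∈ Finset.range d, ((-1 : ℤ) ^ (d + 1 + (j + 1))) •
        D (fun i => if (i : ℕ) < j then a i
            else if (i : ℕ) = j then a j * a (j + 1)
            else a ((i : ℕ) + 1))

end RingA

/-- Hochschild `d`-cochains: `K`-multilinear maps `A^d → A`. -/
abbrev Cochain (K A : Type*) [CommRing K] [AddCommGroup A] [Module K A] (d : ℕ) :=
  MultilinearMap K (fun _ : Fin d => A) A


section Dev
variable {A : Type*} [AddCommGroup A]

lemma npow_sign {m n s : ℕ} (h : n = m + 2 * s) : ((-1 : ℤ)) ^ m = (-1 : ℤ) ^ n := by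
  subst h; rw [pow_add, pow_mul]; simp

def str (j e : ℕ) (a : ℕ → A) : ℕ → A := fun i => if i < j then a i else a (i + e - 1)
def seg (j : ℕ) (a : ℕ → A) : ℕ → A := fun t => a (j + t)
def tupl (j e : ℕ) (g : (ℕ → A) → A) (a : ℕ → A) : ℕ → A :=
  Function.update (str j e a) j (g (seg j a))
def insR (j e : ℕ) (f g : (ℕ → A) → A) : (ℕ → A) → A :=
  fun a => f (tupl j e g a)
def circR (d e : ℕ) (f g : (ℕ → A) → A) : (ℕ → A) → A :=
  fun a => ∑ j ∈ Finset.range d, ((-1 : ℤ) ^ ((e + 1) * j)) • insR j e f g a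
def gbrR (d e : ℕ) (f g : (ℕ → A) → A) : (ℕ → A) → A :=
  fun a => circR d e f g a - ((-1 : ℤ) ^ ((d + 1) * (e + 1))) • circR e d g f a

lemma tupl_lt {i j : ℕ} (e : ℕ) (g : (ℕ → A) → A) (a : ℕ → A) (h : i < j) :
    tupl j e g a i = a i := by
  rw [tupl, Function.update_apply, if_neg (by omega), str, if_pos h]
lemma tupl_self (j e : ℕ) (g : (ℕ → A) → A) (a : ℕ → A) :
    tupl j e g a j = g (seg j a) := by
  rw [tupl, Function.update_self]
lemma tupl_gt {i j : ℕ} (e : ℕ) (g : (ℕ → A) → A) (a : ℕ → A) (h : j < i) :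
    tupl j e g a i = a (i + e - 1) := by
  rw [tupl, Function.update_apply, if_neg (by omega), str, if_neg (by omega)]

def SlotAdd (d : ℕ) (f : (ℕ → A) → A) : Prop :=
  ∀ j < d, ∀ (a : ℕ → A) (x y : A),
    f (Function.update a j (x + y)) = f (Function.update a j x) + f (Function.update a j y)

def Reads (d : ℕ) (f : (ℕ → A) → A) : Prop :=
  ∀ a b : ℕ → A, (∀ i < d, a i = b i) → f a = f b

def slotHom (f : (ℕ → A) → A) (j : ℕ) (a : ℕ → A)
    (h : ∀ x y, f (Function.update a j (x + y))
      = f (Function.update a j x) + f (Function.update a j y)) : A →+ A :=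
  AddMonoidHom.mk' (fun x => f (Function.update a j x)) h

lemma nested (j k y z : ℕ) (f g h : (ℕ → A) → A) (a : ℕ → A)
    (hjk : j ≤ k) (hky : k < j + y) :
    insR k z (insR j y f g) h a = insR j (y + z - 1) f (insR (k - j) z g h) a := by
  have hy : 1 ≤ y := by omega
  simp only [insR]
  congr 1
  funext i
  rcases lt_trichotomy i j with hij | rfl | hij
  · rw [tupl_lt _ _ _ hij, tupl_lt _ _ _ (by omega), tupl_lt _ _ _ (by omega)]
  · rw [tupl_self, tupl_self]
    congr 1
    funext t
    simp only [seg, insR]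
    rcases lt_trichotomy t (k - i) with htk | htk | htk
    · rw [tupl_lt _ _ _ (by omega), tupl_lt _ _ _ (by omega)]
      simp only [seg]
    · rw [htk, show i + (k - i) = k by omega, tupl_self, tupl_self]
      congr 1
      funext s
      simp only [seg]
      congr 1
      omega
    · rw [tupl_gt _ _ _ (by omega), tupl_gt _ _ _ (by omega)]
      simp only [seg]
      congr 1
      omega
  · rw [tupl_gt _ _ _ hij, tupl_gt _ _ _ (by omega), tupl_gt _ _ _ (by omega)]
    congr 1
    omega

lemma disjoint_law (j k y z : ℕ) (f g h : (ℕ → A) → A) (a : ℕ → A)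
    (hk : j + y ≤ k) (hg : Reads y g) :
    insR k z (insR j y f g) h a = insR j y (insR (k - y + 1) z f h) g a := by
  set K := k - y + 1 with hK
  have hKj : j < K := by omega
  simp only [insR]
  congr 1
  funext i
  rcases lt_trichotomy i j with hij | rfl | hij
  · rw [tupl_lt _ _ _ hij, tupl_lt _ _ _ (by omega), tupl_lt _ _ _ (by omega),
      tupl_lt _ _ _ (by omega)]
  · rw [tupl_self, tupl_lt _ _ _ hKj, tupl_self]
    apply hg
    intro t ht
    simp only [seg]
    rw [tupl_lt _ _ _ (by omega)]
  · rw [tupl_gt _ _ _ hij]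
    rcases lt_trichotomy i K with hiK | hiK | hiK
    · rw [tupl_lt _ _ _ (by omega), tupl_lt _ _ _ hiK, tupl_gt _ _ _ hij]
    · rw [show i + y - 1 = k by omega, tupl_self, hiK, tupl_self]
      congr 1
      funext s
      simp only [seg]
      rw [tupl_gt _ _ _ (by omega)]
      congr 1
      omega
    · rw [tupl_gt _ _ _ (by omega), tupl_gt _ _ _ hiK, tupl_gt _ _ _ (by omega)]
      congr 1
      omega

lemma circ_left (x y X z : ℕ) (f g h : (ℕ → A) → A) (a : ℕ → A) :
    circR X z (circR x y f g) h a
      = ∑ p ∈ Finset.range x ×ˢ Finset.range X,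
          ((-1 : ℤ) ^ ((z + 1) * p.2 + (y + 1) * p.1)) • insR p.2 z (insR p.1 y f g) h a := by
  rw [Finset.sum_product]
  rw [Finset.sum_comm]
  simp only [circR, insR, Finset.smul_sum, smul_smul, ← pow_add]

lemma circ_right (x y z : ℕ) (f g h : (ℕ → A) → A) (a : ℕ → A)
    (hf : SlotAdd x f) (hyz : 1 ≤ y + z) :
    circR x (y + z - 1) f (circR y z g h) a
      = ∑ p ∈ Finset.range x ×ˢ Finset.range y,
          ((-1 : ℤ) ^ ((z + 1) * (p.1 + p.2) + (y + 1) * p.1)) •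
            insR (p.1 + p.2) z (insR p.1 y f g) h a := by
  rw [Finset.sum_product, circR]
  apply Finset.sum_congr rfl
  intro j hj
  rw [Finset.mem_range] at hj
  have hφ := fun x' y' => hf j hj (str j (y + z - 1) a) x' y'
  have key : insR j (y + z - 1) f (circR y z g h) a
      = ∑ k ∈ Finset.range y, ((-1 : ℤ) ^ ((z + 1) * k)) •
          insR j (y + z - 1) f (insR k z g h) a := by
    have h1 : insR j (y + z - 1) f (circR y z g h) a
        = (slotHom f j (str j (y + z - 1) a) hφ)
            (∑ k ∈ Finset.range y, ((-1 : ℤ) ^ ((z + 1) * k)) • insR k z g h (seg j a)) := rfl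
    rw [h1, map_sum]
    apply Finset.sum_congr rfl
    intro k _
    rw [map_zsmul]
    rfl
  rw [key, Finset.smul_sum]
  apply Finset.sum_congr rfl
  intro k hk
  rw [Finset.mem_range] at hk
  have hn := nested j (j + k) y z f g h a (by omega) (by omega)
  rw [show j + k - j = k by omega] at hn
  rw [← hn, smul_smul, ← pow_add]
  congr 1
  rw [show (y + z - 1 + 1) = y + z by omega]
  apply npow_sign (s := j)
  ring

lemma assoc_canonical (x y z : ℕ) (f g h : (ℕ → A) → A) (a : ℕ → A)
    (hf : SlotAdd x f) (hg : Reads y g) (hyz : 1 ≤ y + z) :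
    circR (x + y - 1) z (circR x y f g) h a - circR x (y + z - 1) f (circR y z g h) a
      = ∑ p ∈ (Finset.range x ×ˢ Finset.range x).filter (fun p => p.1 < p.2),
          (((-1 : ℤ) ^ ((z + 1) * (p.2 + y - 1) + (y + 1) * p.1)) •
              insR p.1 y (insR p.2 z f h) g a
            + ((-1 : ℤ) ^ ((z + 1) * p.1 + (y + 1) * p.2)) •
              insR p.1 z (insR p.2 y f g) h a) := by
  rw [circ_left x y (x + y - 1) z f g h a, circ_right x y z f g h a hf hyz]
  rw [← Finset.sum_filter_add_sum_filter_not (Finset.range x ×ˢ Finset.range (x + y - 1))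
    (fun p => p.1 ≤ p.2 ∧ p.2 < p.1 + y)]
  have hmid : ∑ p ∈ (Finset.range x ×ˢ Finset.range (x + y - 1)).filter
        (fun p => p.1 ≤ p.2 ∧ p.2 < p.1 + y),
        ((-1 : ℤ) ^ ((z + 1) * p.2 + (y + 1) * p.1)) • insR p.2 z (insR p.1 y f g) h a
      = ∑ p ∈ Finset.range x ×ˢ Finset.range y,
          ((-1 : ℤ) ^ ((z + 1) * (p.1 + p.2) + (y + 1) * p.1)) •
            insR (p.1 + p.2) z (insR p.1 y f g) h a := by
    apply Finset.sum_nbij' (fun p => (p.1, p.2 - p.1)) (fun q => (q.1, q.1 + q.2))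
    · intro p hp
      simp only [Finset.mem_filter, Finset.mem_product, Finset.mem_range] at hp ⊢
      omega
    · intro q hq
      simp only [Finset.mem_filter, Finset.mem_product, Finset.mem_range] at hq ⊢
      omega
    · intro p hp
      simp only [Finset.mem_filter, Finset.mem_product, Finset.mem_range] at hp
      ext <;> simp <;> omega
    · intro q hq
      simp only [Finset.mem_product, Finset.mem_range] at hq
      ext <;> simp
    · intro p hp
      simp only [Finset.mem_filter, Finset.mem_product, Finset.mem_range] at hp
      have hpp : p.1 + (p.2 - p.1) = p.2 := by omega
      dsimp only
      rw [hpp]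
  rw [hmid, add_sub_cancel_left]
  rw [← Finset.sum_filter_add_sum_filter_not ((Finset.range x ×ˢ Finset.range (x + y - 1)).filter
    (fun p => ¬(p.1 ≤ p.2 ∧ p.2 < p.1 + y))) (fun p => p.2 < p.1)]
  rw [Finset.sum_add_distrib]
  have hleft : ∑ p ∈ ((Finset.range x ×ˢ Finset.range (x + y - 1)).filter
        (fun p => ¬(p.1 ≤ p.2 ∧ p.2 < p.1 + y))).filter (fun p => p.2 < p.1),
        ((-1 : ℤ) ^ ((z + 1) * p.2 + (y + 1) * p.1)) • insR p.2 z (insR p.1 y f g) h a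
      = ∑ p ∈ (Finset.range x ×ˢ Finset.range x).filter (fun p => p.1 < p.2),
          ((-1 : ℤ) ^ ((z + 1) * p.1 + (y + 1) * p.2)) • insR p.1 z (insR p.2 y f g) h a := by
    apply Finset.sum_nbij' (fun p => (p.2, p.1)) (fun q => (q.2, q.1))
    · intro p hp
      simp only [Finset.mem_filter, Finset.mem_product, Finset.mem_range] at hp ⊢
      omega
    · intro q hq
      simp only [Finset.mem_filter, Finset.mem_product, Finset.mem_range] at hq ⊢
      omega
    · intro p _; rfl
    · intro q _; rfl
    · intro p hp; rfl
  have hright : ∑ p ∈ ((Finset.range x ×ˢ Finset.range (x + y - 1)).filter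
        (fun p => ¬(p.1 ≤ p.2 ∧ p.2 < p.1 + y))).filter (fun p => ¬(p.2 < p.1)),
        ((-1 : ℤ) ^ ((z + 1) * p.2 + (y + 1) * p.1)) • insR p.2 z (insR p.1 y f g) h a
      = ∑ p ∈ (Finset.range x ×ˢ Finset.range x).filter (fun p => p.1 < p.2),
          ((-1 : ℤ) ^ ((z + 1) * (p.2 + y - 1) + (y + 1) * p.1)) •
            insR p.1 y (insR p.2 z f h) g a := by
    apply Finset.sum_nbij' (fun p => (p.1, p.2 - y + 1)) (fun q => (q.1, q.2 + y - 1))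
    · intro p hp
      simp only [Finset.mem_filter, Finset.mem_product, Finset.mem_range] at hp ⊢
      omega
    · intro q hq
      simp only [Finset.mem_filter, Finset.mem_product, Finset.mem_range] at hq ⊢
      omega
    · intro p hp
      simp only [Finset.mem_filter, Finset.mem_product, Finset.mem_range] at hp
      ext <;> simp <;> omega
    · intro q hq
      simp only [Finset.mem_filter, Finset.mem_product, Finset.mem_range] at hq
      ext <;> simp <;> omega
    · intro p hp
      simp only [Finset.mem_filter, Finset.mem_product, Finset.mem_range] at hp
      have hpp : p.2 - y + 1 + y - 1 = p.2 := by omega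
      dsimp only
      rw [disjoint_law p.1 p.2 y z f g h a (by omega) hg, hpp]
  rw [hleft, hright, add_comm]

lemma preLie (x y z : ℕ) (f g h : (ℕ → A) → A) (a : ℕ → A)
    (hf : SlotAdd x f) (hg : Reads y g) (hh : Reads z h) (hyz : 1 ≤ y + z) :
    circR (x + y - 1) z (circR x y f g) h a - circR x (y + z - 1) f (circR y z g h) a
      = ((-1 : ℤ) ^ ((y + 1) * (z + 1))) •
        (circR (x + z - 1) y (circR x z f h) g a - circR x (z + y - 1) f (circR z y h g) a) := by
  rw [assoc_canonical x y z f g h a hf hg hyz,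
    assoc_canonical x z y f h g a hf hh (by omega), Finset.smul_sum]
  apply Finset.sum_congr rfl
  intro p hp
  simp only [Finset.mem_filter, Finset.mem_product, Finset.mem_range] at hp
  obtain ⟨q, hq⟩ : ∃ q, p.2 = q + 1 := ⟨p.2 - 1, by omega⟩
  rw [smul_add, smul_smul, smul_smul, add_comm]
  congr 2
  · rw [← pow_add]
    apply npow_sign (s := (y + 1) * z)
    rw [hq, show q + 1 + z - 1 = q + z by omega]
    ring
  · rw [← pow_add]
    apply npow_sign (s := z + 1)
    rw [hq, show q + 1 + y - 1 = q + y by omega]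
    ring

lemma circ_split_left (n e : ℕ) (G H g : (ℕ → A) → A) (c : ℤ) (a : ℕ → A) :
    circR n e (fun b => G b - c • H b) g a = circR n e G g a - c • circR n e H g a := by
  simp only [circR, insR, Finset.smul_sum, smul_sub, smul_smul]
  rw [← Finset.sum_sub_distrib]
  apply Finset.sum_congr rfl
  intro j _
  congr 1
  rw [mul_comm]

lemma circ_split_right (n e : ℕ) (f G H : (ℕ → A) → A) (c : ℤ) (a : ℕ → A)
    (hf : SlotAdd n f) :
    circR n e f (fun b => G b - c • H b) a = circR n e f G a - c • circR n e f H a := by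
  simp only [circR, Finset.smul_sum]
  rw [← Finset.sum_sub_distrib]
  apply Finset.sum_congr rfl
  intro j hj
  rw [Finset.mem_range] at hj
  have hφ := fun x' y' => hf j hj (str j e a) x' y'
  have h1 : insR j e f (fun b => G b - c • H b) a
      = (slotHom f j (str j e a) hφ) (G (seg j a) - c • H (seg j a)) := rfl
  rw [h1, map_sub, map_zsmul, smul_sub, smul_smul, smul_smul]
  have h2 : (slotHom f j (str j e a) hφ) (G (seg j a)) = insR j e f G a := rfl
  have h3 : (slotHom f j (str j e a) hφ) (H (seg j a)) = insR j e f H a := rfl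
  rw [h2, h3, mul_comm ((-1 : ℤ) ^ ((e + 1) * j)) c]

lemma reads_mono {d n : ℕ} {f : (ℕ → A) → A} (h : Reads d f) (hdn : d ≤ n) : Reads n f :=
  fun a b hab => h a b (fun i hi => hab i (by omega))

lemma reads_circ {d e : ℕ} {f g : (ℕ → A) → A} (hf : Reads d f) (hg : Reads e g) :
    Reads (d + e - 1) (circR d e f g) := by
  intro a b hab
  simp only [circR, insR]
  apply Finset.sum_congr rfl
  intro j hj
  rw [Finset.mem_range] at hj
  congr 1
  apply hf
  intro i hi
  rcases lt_trichotomy i j with hij | hij | hij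
  · rw [tupl_lt _ _ _ hij, tupl_lt _ _ _ hij]
    exact hab i (by omega)
  · subst hij
    rw [tupl_self, tupl_self]
    apply hg
    intro t ht
    simp only [seg]
    exact hab (i + t) (by omega)
  · rw [tupl_gt _ _ _ hij, tupl_gt _ _ _ hij]
    exact hab (i + e - 1) (by omega)

lemma reads_gbr {d e : ℕ} {f g : (ℕ → A) → A} (hf : Reads d f) (hg : Reads e g) :
    Reads (d + e - 1) (gbrR d e f g) := by
  intro a b hab
  simp only [gbrR]
  rw [reads_circ hf hg a b hab,
    reads_circ hg hf a b (fun i hi => hab i (by omega))]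

end Dev
section Dev2
variable {A : Type*} [Ring A]

def mR : (ℕ → A) → A := fun a => a 0 * a 1

lemma slotAdd_mR : SlotAdd 2 (mR (A := A)) := by
  intro j hj a x y
  interval_cases j <;>
    simp only [mR, Function.update_apply] <;> norm_num [add_mul, mul_add]

lemma reads_mR : Reads 2 (mR (A := A)) := by
  intro a b hab
  simp only [mR, hab 0 (by omega), hab 1 (by omega)]

theorem mainRaw (d e : ℕ) (f g : (ℕ → A) → A)
    (hf : SlotAdd d f) (hg : SlotAdd e g) (hrf : Reads d f) (hrg : Reads e g)
    (hde : 1 ≤ d + e) (b : ℕ → A) :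
    circR 2 (d + e - 1) mR (gbrR d e f g) b
      - ((-1 : ℤ) ^ (d + e - 1 + 1)) • circR (d + e - 1) 2 (gbrR d e f g) mR b
    = gbrR (d + 1) e
        (fun c => circR 2 d mR f c - ((-1 : ℤ) ^ (d + 1)) • circR d 2 f mR c) g b
      + ((-1 : ℤ) ^ (d + 1)) • gbrR d (e + 1) f
        (fun c => circR 2 e mR g c - ((-1 : ℤ) ^ (e + 1)) • circR e 2 g mR c) b := by
  have gbrR_eq : gbrR d e f g = fun c => circR d e f g c
      - ((-1 : ℤ) ^ ((d + 1) * (e + 1))) • circR e d g f c := rfl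
  simp only [gbrR]
  rw [gbrR_eq]
  rw [circ_split_right 2 (d + e - 1) mR (circR d e f g) (circR e d g f) _ b slotAdd_mR]
  rw [circ_split_left (d + e - 1) 2 (circR d e f g) (circR e d g f) mR _ b]
  rw [circ_split_left (d + 1) e (circR 2 d mR f) (circR d 2 f mR) g _ b]
  rw [circ_split_right e (d + 1) g (circR 2 d mR f) (circR d 2 f mR) _ b hg]
  rw [circ_split_right d (e + 1) f (circR 2 e mR g) (circR e 2 g mR) _ b hf]
  rw [circ_split_left (e + 1) d (circR 2 e mR g) (circR e 2 g mR) f _ b]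
  have P1 := preLie 2 d e mR f g b slotAdd_mR hrf hrg hde
  rw [show 2 + d - 1 = d + 1 by omega, show 2 + e - 1 = e + 1 by omega,
    show e + d - 1 = d + e - 1 by omega] at P1
  have P2 := preLie d 2 e f mR g b hf reads_mR hrg (by omega)
  rw [show d + 2 - 1 = d + 1 by omega, show 2 + e - 1 = e + 1 by omega,
    show e + 2 - 1 = e + 1 by omega,
    show ((-1 : ℤ)) ^ ((2 + 1) * (e + 1)) = (-1 : ℤ) ^ (e + 1) from
      (npow_sign (s := e + 1) (by ring)).symm] at P2
  have P3 := preLie e 2 d g mR f b hg reads_mR hrf (by omega)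
  rw [show e + 2 - 1 = e + 1 by omega, show 2 + d - 1 = d + 1 by omega,
    show d + 2 - 1 = d + 1 by omega, show e + d - 1 = d + e - 1 by omega,
    show ((-1 : ℤ)) ^ ((2 + 1) * (d + 1)) = (-1 : ℤ) ^ (d + 1) from
      (npow_sign (s := d + 1) (by ring)).symm] at P3
  have E1 := eq_add_of_sub_eq P1
  have E2 := eq_add_of_sub_eq P2
  have E3 := eq_add_of_sub_eq P3
  rw [show d + e - 1 + 1 = d + e by omega, E1, E2, E3]
  rcases Nat.mod_two_eq_zero_or_one d with hd | hd <;>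
    rcases Nat.mod_two_eq_zero_or_one e with he | he
  · simp only [show ((-1 : ℤ)) ^ (d + e) = 1 from Even.neg_one_pow (by first | (simp only [Nat.even_mul, Nat.odd_mul]; simp only [Nat.even_iff, Nat.odd_iff]; omega) | (simp only [Nat.even_iff, Nat.odd_iff]; omega)),
      show ((-1 : ℤ)) ^ ((d + 1 + 1) * (e + 1)) = 1 from Even.neg_one_pow (by first | (simp only [Nat.even_mul, Nat.odd_mul]; simp only [Nat.even_iff, Nat.odd_iff]; omega) | (simp only [Nat.even_iff, Nat.odd_iff]; omega)),
      show ((-1 : ℤ)) ^ ((d + 1) * (e + 1 + 1)) = 1 from Even.neg_one_pow (by first | (simp only [Nat.even_mul, Nat.odd_mul]; simp only [Nat.even_iff, Nat.odd_iff]; omega) | (simp only [Nat.even_iff, Nat.odd_iff]; omega)),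
      show ((-1 : ℤ)) ^ ((d + 1) * (e + 1)) = (-1) from Odd.neg_one_pow (by first | (simp only [Nat.even_mul, Nat.odd_mul]; simp only [Nat.even_iff, Nat.odd_iff]; omega) | (simp only [Nat.even_iff, Nat.odd_iff]; omega)),
      show ((-1 : ℤ)) ^ (e + 1) = (-1) from Odd.neg_one_pow (by first | (simp only [Nat.even_mul, Nat.odd_mul]; simp only [Nat.even_iff, Nat.odd_iff]; omega) | (simp only [Nat.even_iff, Nat.odd_iff]; omega)),
      show ((-1 : ℤ)) ^ (d + 1) = (-1) from Odd.neg_one_pow (by first | (simp only [Nat.even_mul, Nat.odd_mul]; simp only [Nat.even_iff, Nat.odd_iff]; omega) | (simp only [Nat.even_iff, Nat.odd_iff]; omega))] 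
    module
  · simp only [show ((-1 : ℤ)) ^ (d + e) = (-1) from Odd.neg_one_pow (by first | (simp only [Nat.even_mul, Nat.odd_mul]; simp only [Nat.even_iff, Nat.odd_iff]; omega) | (simp only [Nat.even_iff, Nat.odd_iff]; omega)),
      show ((-1 : ℤ)) ^ ((d + 1 + 1) * (e + 1)) = 1 from Even.neg_one_pow (by first | (simp only [Nat.even_mul, Nat.odd_mul]; simp only [Nat.even_iff, Nat.odd_iff]; omega) | (simp only [Nat.even_iff, Nat.odd_iff]; omega)),
      show ((-1 : ℤ)) ^ ((d + 1) * (e + 1 + 1)) = (-1) from Odd.neg_one_pow (by first | (simp only [Nat.even_mul, Nat.odd_mul]; simp only [Nat.even_iff, Nat.odd_iff]; omega) | (simp only [Nat.even_iff, Nat.odd_iff]; omega)),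
      show ((-1 : ℤ)) ^ ((d + 1) * (e + 1)) = 1 from Even.neg_one_pow (by first | (simp only [Nat.even_mul, Nat.odd_mul]; simp only [Nat.even_iff, Nat.odd_iff]; omega) | (simp only [Nat.even_iff, Nat.odd_iff]; omega)),
      show ((-1 : ℤ)) ^ (e + 1) = 1 from Even.neg_one_pow (by first | (simp only [Nat.even_mul, Nat.odd_mul]; simp only [Nat.even_iff, Nat.odd_iff]; omega) | (simp only [Nat.even_iff, Nat.odd_iff]; omega)),
      show ((-1 : ℤ)) ^ (d + 1) = (-1) from Odd.neg_one_pow (by first | (simp only [Nat.even_mul, Nat.odd_mul]; simp only [Nat.even_iff, Nat.odd_iff]; omega) | (simp only [Nat.even_iff, Nat.odd_iff]; omega))] 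
    module
  · simp only [show ((-1 : ℤ)) ^ (d + e) = (-1) from Odd.neg_one_pow (by first | (simp only [Nat.even_mul, Nat.odd_mul]; simp only [Nat.even_iff, Nat.odd_iff]; omega) | (simp only [Nat.even_iff, Nat.odd_iff]; omega)),
      show ((-1 : ℤ)) ^ ((d + 1 + 1) * (e + 1)) = (-1) from Odd.neg_one_pow (by first | (simp only [Nat.even_mul, Nat.odd_mul]; simp only [Nat.even_iff, Nat.odd_iff]; omega) | (simp only [Nat.even_iff, Nat.odd_iff]; omega)),
      show ((-1 : ℤ)) ^ ((d + 1) * (e + 1 + 1)) = 1 from Even.neg_one_pow (by first | (simp only [Nat.even_mul, Nat.odd_mul]; simp only [Nat.even_iff, Nat.odd_iff]; omega) | (simp only [Nat.even_iff, Nat.odd_iff]; omega)),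
      show ((-1 : ℤ)) ^ ((d + 1) * (e + 1)) = 1 from Even.neg_one_pow (by first | (simp only [Nat.even_mul, Nat.odd_mul]; simp only [Nat.even_iff, Nat.odd_iff]; omega) | (simp only [Nat.even_iff, Nat.odd_iff]; omega)),
      show ((-1 : ℤ)) ^ (e + 1) = (-1) from Odd.neg_one_pow (by first | (simp only [Nat.even_mul, Nat.odd_mul]; simp only [Nat.even_iff, Nat.odd_iff]; omega) | (simp only [Nat.even_iff, Nat.odd_iff]; omega)),
      show ((-1 : ℤ)) ^ (d + 1) = 1 from Even.neg_one_pow (by first | (simp only [Nat.even_mul, Nat.odd_mul]; simp only [Nat.even_iff, Nat.odd_iff]; omega) | (simp only [Nat.even_iff, Nat.odd_iff]; omega))] 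
    module
  · simp only [show ((-1 : ℤ)) ^ (d + e) = 1 from Even.neg_one_pow (by first | (simp only [Nat.even_mul, Nat.odd_mul]; simp only [Nat.even_iff, Nat.odd_iff]; omega) | (simp only [Nat.even_iff, Nat.odd_iff]; omega)),
      show ((-1 : ℤ)) ^ ((d + 1 + 1) * (e + 1)) = 1 from Even.neg_one_pow (by first | (simp only [Nat.even_mul, Nat.odd_mul]; simp only [Nat.even_iff, Nat.odd_iff]; omega) | (simp only [Nat.even_iff, Nat.odd_iff]; omega)),
      show ((-1 : ℤ)) ^ ((d + 1) * (e + 1 + 1)) = 1 from Even.neg_one_pow (by first | (simp only [Nat.even_mul, Nat.odd_mul]; simp only [Nat.even_iff, Nat.odd_iff]; omega) | (simp only [Nat.even_iff, Nat.odd_iff]; omega)),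
      show ((-1 : ℤ)) ^ ((d + 1) * (e + 1)) = 1 from Even.neg_one_pow (by first | (simp only [Nat.even_mul, Nat.odd_mul]; simp only [Nat.even_iff, Nat.odd_iff]; omega) | (simp only [Nat.even_iff, Nat.odd_iff]; omega)),
      show ((-1 : ℤ)) ^ (e + 1) = 1 from Even.neg_one_pow (by first | (simp only [Nat.even_mul, Nat.odd_mul]; simp only [Nat.even_iff, Nat.odd_iff]; omega) | (simp only [Nat.even_iff, Nat.odd_iff]; omega)),
      show ((-1 : ℤ)) ^ (d + 1) = 1 from Even.neg_one_pow (by first | (simp only [Nat.even_mul, Nat.odd_mul]; simp only [Nat.even_iff, Nat.odd_iff]; omega) | (simp only [Nat.even_iff, Nat.odd_iff]; omega))] 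
    module
def finj (n : ℕ) (F : (Fin n → A) → A) : (ℕ → A) → A := fun b => F (fun i => b ↑i)

lemma reads_finj (n : ℕ) (F : (Fin n → A) → A) : Reads n (finj n F) := by
  intro a b hab
  simp only [finj]
  congr 1
  funext i
  exact hab ↑i i.isLt

lemma pad_strip (n : ℕ) (Fr : (ℕ → A) → A) (h : Reads n Fr) :
    finj n (res n Fr) = Fr := by
  funext b
  apply h
  intro i hi
  simp only [pad, dif_pos hi]

lemma reads_sub (n : ℕ) (F G : (ℕ → A) → A) (c : ℤ) (hF : Reads n F) (hG : Reads n G) :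
    Reads n (fun b => F b - c • G b) := by
  intro a b hab
  simp only [hF a b hab, hG a b hab]

lemma circ_eq (d e : ℕ) (F : (Fin d → A) → A) (G : (Fin e → A) → A) (b : ℕ → A) :
    circ d e F G b = circR d e (finj d F) (finj e G) b := by
  simp only [circ, circR, insR, finj]
  apply Finset.sum_congr rfl
  intro j hj
  congr 2
  funext i
  rcases lt_trichotomy (i : ℕ) j with hij | hij | hij
  · rw [if_pos hij, tupl_lt _ _ _ hij]
  · rw [if_neg (by omega), if_pos hij, hij, tupl_self]
    congr 1
  · rw [if_neg (by omega), if_neg (by omega), tupl_gt _ _ _ hij]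

lemma gbr_eq (d e : ℕ) (F : (Fin d → A) → A) (G : (Fin e → A) → A) (b : ℕ → A) :
    gbr d e F G b = gbrR d e (finj d F) (finj e G) b := by
  simp only [gbr, gbrR, circ_eq]

lemma hdel_eq (n : ℕ) (F : (Fin n → A) → A) (b : ℕ → A) :
    hdel n F b = circR 2 n mR (finj n F) b
      - ((-1 : ℤ) ^ (n + 1)) • circR n 2 (finj n F) mR b := by
  have e1 : finj n F (seg 0 b) = F (fun i => b (i : ℕ)) := by
    simp only [finj, seg]
    congr 1
    funext i
    congr 1
    omega
  have e2 : b (1 + n - 1) = b n := by congr 1; omega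
  have e3 : finj n F (seg 1 b) = F (fun i => b ((i : ℕ) + 1)) := by
    simp only [finj, seg]
    congr 1
    funext i
    congr 1
    omega
  have h2 : circR 2 n mR (finj n F) b
      = F (fun i => b (i : ℕ)) * b n
        + ((-1 : ℤ) ^ (n + 1)) • (b 0 * F (fun i => b ((i : ℕ) + 1))) := by
    simp only [circR, Finset.sum_range_succ, Finset.sum_range_zero, zero_add, mul_zero,
      pow_zero, one_smul, mul_one, insR, mR]
    rw [tupl_self, tupl_self, tupl_gt _ _ _ (show (0:ℕ) < 1 by omega),
      tupl_lt _ _ _ (show (0:ℕ) < 1 by omega), e1, e2, e3]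
  have h3 : ∀ j, insR j 2 (finj n F) mR b
      = F (fun i => if (i : ℕ) < j then b i
          else if (i : ℕ) = j then b j * b (j + 1)
          else b ((i : ℕ) + 1)) := by
    intro j
    simp only [insR, finj]
    congr 1
    funext i
    rcases lt_trichotomy (i : ℕ) j with hij | hij | hij
    · rw [tupl_lt _ _ _ hij, if_pos hij]
    · rw [hij, tupl_self, if_neg (by omega), if_pos rfl]
      simp only [mR, seg, Nat.add_zero]
    · rw [tupl_gt _ _ _ hij, if_neg (by omega), if_neg (by omega)]
      congr 1
  rw [hdel, h2, sub_eq_add_neg]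
  congr 1
  rw [circR, Finset.smul_sum, ← Finset.sum_neg_distrib]
  apply Finset.sum_congr rfl
  intro j hj
  rw [h3 j, smul_smul, ← neg_smul]
  congr 1
  rw [show -((-1 : ℤ) ^ (n + 1) * (-1) ^ ((2 + 1) * j))
      = (-1 : ℤ) ^ (n + 1 + (2 + 1) * j + 1) from by
    rw [pow_succ, pow_add]; ring]
  exact npow_sign (s := j) (by ring)

end Dev2
section Stmt
variable {K A : Type*} [CommRing K] [Ring A] [Algebra K A]

lemma slotAdd_finj (d : ℕ) (D : Cochain K A d) : SlotAdd d (finj d ⇑D) := by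
  intro j hj c x y
  have hu : ∀ v : A, (fun i : Fin d => Function.update c j v (i : ℕ))
      = Function.update (fun i : Fin d => c (i : ℕ)) ⟨j, hj⟩ v := by
    intro v
    funext i
    rw [Function.update_apply, Function.update_apply]
    by_cases hij : (i : ℕ) = j
    · rw [if_pos hij, if_pos (Fin.ext hij)]
    · rw [if_neg hij, if_neg (by simp [Fin.ext_iff, hij])]
  simp only [finj, hu]
  exact D.map_update_add _ _ _ _

theorem statement4' (d e : ℕ) (D : Cochain K A d) (E : Cochain K A e) :
    ∀ a : Fin (d + e) → A,
      res (d + e) (hdel (d + e - 1) (res (d + e - 1) (gbr d e ⇑D ⇑E))) a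
        = res (d + e) (gbr (d + 1) e (res (d + 1) (hdel d ⇑D)) ⇑E) a
          + ((-1 : ℤ) ^ (d + 1)) •
              res (d + e) (gbr d (e + 1) ⇑D (res (e + 1) (hdel e ⇑E))) a := by
  intro a
  simp only [res]
  by_cases hde : d + e = 0
  · obtain rfl : d = 0 := by omega
    obtain rfl : e = 0 := by omega
    have hD : ∀ x : Fin 0 → A, D x = D (fun _ => 0) := fun x => by
      rw [Subsingleton.elim x (fun _ => 0)]
    have hE : ∀ x : Fin 0 → A, E x = E (fun _ => 0) := fun x => by
      rw [Subsingleton.elim x (fun _ => 0)]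
    simp [gbr, circ, hdel, res, pad, eq_iff_true_of_subsingleton]
    simp only [hD, hE]
    abel
  · have h1 : 1 ≤ d + e := by omega
    have hgbr : gbr d e ⇑D ⇑E = gbrR d e (finj d ⇑D) (finj e ⇑E) := funext (gbr_eq d e _ _)
    have hGreads : Reads (d + e - 1) (gbr d e ⇑D ⇑E) := by
      rw [hgbr]; exact reads_gbr (reads_finj _ _) (reads_finj _ _)
    rw [hdel_eq (d + e - 1) (res (d + e - 1) (gbr d e ⇑D ⇑E)) (pad a),
      pad_strip _ _ hGreads, hgbr]
    rw [gbr_eq (d + 1) e (res (d + 1) (hdel d ⇑D)) ⇑E (pad a),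
      gbr_eq d (e + 1) ⇑D (res (e + 1) (hdel e ⇑E)) (pad a)]
    have hdelD : hdel d (⇑D) = (fun c => circR 2 d mR (finj d ⇑D) c
        - ((-1 : ℤ) ^ (d + 1)) • circR d 2 (finj d ⇑D) mR c) := funext (hdel_eq d ⇑D)
    have hdelE : hdel e (⇑E) = (fun c => circR 2 e mR (finj e ⇑E) c
        - ((-1 : ℤ) ^ (e + 1)) • circR e 2 (finj e ⇑E) mR c) := funext (hdel_eq e ⇑E)
    have hrD : Reads (d + 1) (hdel d ⇑D) := by
      rw [hdelD]
      exact reads_sub _ _ _ _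
        (reads_mono (reads_circ reads_mR (reads_finj d ⇑D)) (by omega))
        (reads_mono (reads_circ (reads_finj d ⇑D) reads_mR) (by omega))
    have hrE : Reads (e + 1) (hdel e ⇑E) := by
      rw [hdelE]
      exact reads_sub _ _ _ _
        (reads_mono (reads_circ reads_mR (reads_finj e ⇑E)) (by omega))
        (reads_mono (reads_circ (reads_finj e ⇑E) reads_mR) (by omega))
    rw [pad_strip _ _ hrD, pad_strip _ _ hrE, hdelD, hdelE]
    exact mainRaw d e (finj d ⇑D) (finj e ⇑E) (slotAdd_finj d D) (slotAdd_finj e E)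
      (reads_finj _ _) (reads_finj _ _) h1 (pad a)

end Stmt

/-- The Hochschild differential is a graded derivation of the Gerstenhaber
bracket: for all `D ∈ C^d(A)` and `E ∈ C^e(A)`,
`δ[D,E] = [δD, E] + (−1)^{d+1} [D, δE]` in `C^{d+e}(A)`. -/
theorem statement4 {K A : Type*} [CommRing K] [Algebra ℚ K] [Ring A] [Algebra K A]
    (d e : ℕ) (D : Cochain K A d) (E : Cochain K A e) :
    ∀ a : Fin (d + e) → A,
      res (d + e) (hdel (d + e - 1) (res (d + e - 1) (gbr d e ⇑D ⇑E))) a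
        = res (d + e) (gbr (d + 1) e (res (d + 1) (hdel d ⇑D)) ⇑E) a
          + ((-1 : ℤ) ^ (d + 1)) •
              res (d + e) (gbr d (e + 1) ⇑D (res (e + 1) (hdel e ⇑E))) a :=
  statement4' d e D E

end NCCalc
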